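/- Let m be a positive integer, let x ≥ 1 be a real number such that every prime divisor of m is at most x, and let y be a real number with 1 ≤ y ≤ m. Then there exists a positive divisor d of m with y ≤ d ≤ x·y. -/

import Mathlib

/-- The greedy divisor lemma: if every prime divisor of the positive integer `m` is at
most `x` (where `x ≥ 1`), then for any real `y` with `1 ≤ y ≤ m` there is a positive
divisor `d` of `m` with `y ≤ d ≤ x·y`. -/
theorem divisor_in_interval (m : ℕ) (hm : 0 < m) (x y : ℝ) (hx : 1 ≤ x)
    (hprimes : ∀ p : ℕ, p.Prime → p ∣ m → (p : ℝ) ≤ x)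
    (hy1 : 1 ≤ y) (hym : y ≤ (m : ℝ)) :
    ∃ d : ℕ, d ∣ m ∧ y ≤ (d : ℝ) ∧ (d : ℝ) ≤ x * y := by
  have hy0 : (0:ℝ) < y := lt_of_lt_of_le one_pos hy1
  have hex : ∃ d : ℕ, d ∣ m ∧ y ≤ (d : ℝ) := ⟨m, dvd_refl m, hym⟩
  classical
  set d := Nat.find hex with hd
  obtain ⟨hdvd, hyd⟩ := Nat.find_spec hex
  refine ⟨d, hdvd, hyd, ?_⟩
  have hd0 : 0 < d := Nat.pos_of_dvd_of_pos hdvd hm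
  rcases eq_or_lt_of_le (show 1 ≤ d from hd0) with h1 | h1
  · have : (d:ℝ) = 1 := by rw [← h1]; norm_num
    rw [this]
    calc (1:ℝ) ≤ y := hy1
      _ ≤ x * y := le_mul_of_one_le_left hy0.le hx
  · -- d > 1, take a prime factor
    obtain ⟨p, hp, hpd⟩ := Nat.exists_prime_and_dvd (by omega : d ≠ 1)
    obtain ⟨e, he⟩ := hpd
    have hedvd : e ∣ m := dvd_trans ⟨p, by simpa [Nat.mul_comm] using he⟩ hdvd
    have hed : e < d := by
      have hp2 := hp.two_le
      have he0 : 0 < e := by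
        rcases Nat.eq_zero_or_pos e with h | h
        · rw [h, Nat.mul_zero] at he; omega
        · exact h
      calc e = 1 * e := (one_mul e).symm
        _ < p * e := (Nat.mul_lt_mul_right he0).mpr (by omega)
        _ = d := he.symm
    have hey : (e:ℝ) < y := by
      by_contra hcon
      push_neg at hcon
      exact absurd (Nat.find_min hex hed ⟨hedvd, hcon⟩) (by simp)
    have hpm : p ∣ m := dvd_trans ⟨e, he⟩ hdvd
    have hpx : (p:ℝ) ≤ x := hprimes p hp hpm
    have hp0 : (0:ℝ) < p := by exact_mod_cast hp.pos
    calc (d:ℝ) = p * e := by rw [he]; push_cast; ring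
      _ ≤ p * y := by nlinarith
      _ ≤ x * y := by nlinarith
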